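/- arXiv:2605.11642 — 3 statements merged into one kernel-verified Lean document; each statement's English description precedes it below -/
import Mathlib

section
/- Let δ = d mod 2 and c_{kl} = e^{-iπ(k(k+δ) + l(l+δ))/d}. Then for all integers a, b, Σ_{m,t=0}^{d-1} c_{m+a, t+b} · conj(c_{m,t}) · ω^{-ta - mb} = d² · e^{-iπ(a² + b² + δ(a+b))/d} if d divides a+b, and 0 otherwise. -/
open Complex BigOperators

noncomputable section

def ω (d : ℕ) : ℂ := Complex.exp (2 * Real.pi * Complex.I / (d : ℂ))

def cc (d : ℕ) (k l : ℤ) : ℂ :=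
  Complex.exp (-Real.pi * Complex.I * (k : ℂ) * ((k : ℂ) + (d % 2 : ℕ)) / (d : ℂ)) *
  Complex.exp (-Real.pi * Complex.I * (l : ℂ) * ((l : ℂ) + (d % 2 : ℕ)) / (d : ℂ))

/-- The interference sum `Σ_{m,t} c_{m+a,t+b} c*_{m,t} ω^{-ta-mb}` equals
`d² e^{-iπ(a²+b²+δ(a+b))/d}` when `d ∣ a+b`, and `0` otherwise. -/
theorem interference_sum_n1 (d : ℕ) (hd : 2 ≤ d) (a b : ℤ) :
    ∑ m ∈ Finset.range d, ∑ t ∈ Finset.range d,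
        cc d ((m : ℤ) + a) ((t : ℤ) + b) * (starRingEnd ℂ) (cc d m t) *
          ω d ^ (-((t : ℤ) * a + (m : ℤ) * b))
      = if (d : ℤ) ∣ (a + b) then
          (d : ℂ) ^ 2 * Complex.exp (-Real.pi * Complex.I *
            ((a : ℂ) ^ 2 + (b : ℂ) ^ 2 + (d % 2 : ℕ) * ((a : ℂ) + (b : ℂ))) / (d : ℂ))
        else 0 := by
  have hdn : d ≠ 0 := by omega
  have hd0 : (d : ℂ) ≠ 0 := Nat.cast_ne_zero.mpr hdn
  have hprim : IsPrimitiveRoot (ω d) d := Complex.isPrimitiveRoot_exp d hdn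
  set ζ : ℂ := ω d ^ (-(a + b)) with hζ
  set C : ℂ := -Real.pi * Complex.I *
      ((a : ℂ) ^ 2 + (b : ℂ) ^ 2 + (d % 2 : ℕ) * ((a : ℂ) + (b : ℂ))) / (d : ℂ) with hC
  have hpow : ∀ n : ℕ, ζ ^ n = Complex.exp ((((-(a+b)) * n : ℤ) : ℂ) * (2 * Real.pi * Complex.I / (d : ℂ))) := by
    intro n
    rw [Complex.exp_int_mul, hζ, ← zpow_natCast (ω d ^ (-(a+b))) n, ← zpow_mul]
    rfl
  have hωz : ∀ n : ℤ, ω d ^ n = Complex.exp ((n : ℂ) * (2 * Real.pi * Complex.I / (d : ℂ))) := by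
    intro n; rw [Complex.exp_int_mul]; rfl
  have hterm : ∀ m t : ℕ,
      cc d ((m : ℤ) + a) ((t : ℤ) + b) * (starRingEnd ℂ) (cc d m t) *
          ω d ^ (-((t : ℤ) * a + (m : ℤ) * b))
        = Complex.exp C * (ζ ^ m * ζ ^ t) := by
    intro m t
    rw [hpow, hpow, hωz]
    simp only [cc, map_mul, ← Complex.exp_conj, map_div₀, map_mul, map_add, map_neg,
      Complex.conj_I, Complex.conj_ofReal, map_intCast, map_natCast]
    rw [← Complex.exp_add, ← Complex.exp_add, ← Complex.exp_add, ← Complex.exp_add,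
      ← Complex.exp_add, ← Complex.exp_add]
    congr 1
    push_cast
    rw [hC]
    simp only [mul_div_assoc', ← add_div]
    rw [div_eq_div_iff hd0 hd0]
    ring
  have hsum : (∑ m ∈ Finset.range d, ∑ t ∈ Finset.range d,
        cc d ((m : ℤ) + a) ((t : ℤ) + b) * (starRingEnd ℂ) (cc d m t) *
          ω d ^ (-((t : ℤ) * a + (m : ℤ) * b)))
      = Complex.exp C * ((∑ m ∈ Finset.range d, ζ ^ m) * (∑ t ∈ Finset.range d, ζ ^ t)) := by
    rw [Finset.sum_mul_sum, Finset.mul_sum]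
    refine Finset.sum_congr rfl fun m _ => ?_
    rw [Finset.mul_sum]
    exact Finset.sum_congr rfl fun t _ => hterm m t
  rw [hsum]
  by_cases hdvd : (d : ℤ) ∣ (a + b)
  · have h1 : ζ = 1 := by
      rw [hζ, hprim.zpow_eq_one_iff_dvd]
      exact dvd_neg.mpr hdvd
    rw [if_pos hdvd, h1]
    simp only [one_pow, Finset.sum_const, Finset.card_range, nsmul_eq_mul, mul_one]
    rw [hC]; ring
  · have hne : ζ ≠ 1 := by
      rw [hζ, Ne, hprim.zpow_eq_one_iff_dvd]
      exact fun h => hdvd (dvd_neg.mp h)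
    have hζd : ζ ^ d = 1 := by
      rw [hζ, ← zpow_natCast, ← zpow_mul, mul_comm, zpow_mul, zpow_natCast,
        hprim.pow_eq_one, one_zpow]
    rw [if_neg hdvd, geom_sum_eq hne, hζd]
    simp
end
end

section
/- Let δ = d mod 2 and c_{kl} = e^{-iπ(k(k+δ) + l(l+δ))/d}. Then for all integers a, b and all nonnegative integers p, q, Σ_{m,t=0}^{d-1} c_{m+a, t+b} · conj(c_{m,t}) · ω^{-ta - pmb - aq(t+b)} = d² · e^{-iπ(a² + b² + 2qab + δ(a+b))/d} if d divides both a + pb and a + b + qa, and 0 otherwise. -/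
open Complex BigOperators

noncomputable section

lemma omega_zpow (d : ℕ) (z : ℤ) :
    ω d ^ z = Complex.exp ((z : ℂ) * (2 * Real.pi * Complex.I / (d : ℂ))) :=
  (Complex.exp_int_mul _ z).symm

lemma omega_pow_d (d : ℕ) (hd : 0 < d) : ω d ^ (d : ℤ) = 1 := by
  have hdc : (d : ℂ) ≠ 0 := Nat.cast_ne_zero.mpr hd.ne'
  rw [omega_zpow, show ((d:ℤ):ℂ) * (2 * Real.pi * Complex.I / (d:ℂ)) =
    2 * Real.pi * Complex.I by push_cast; field_simp, Complex.exp_two_pi_mul_I]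

lemma geom_aux (d : ℕ) (hd : 0 < d) (n : ℤ) :
    ∑ m ∈ Finset.range d, ω d ^ (n * (m : ℤ)) = if (d : ℤ) ∣ n then (d : ℂ) else 0 := by
  have hsum : ∀ m : ℕ, ω d ^ (n * (m : ℤ)) = (ω d ^ n) ^ m := by
    intro m; rw [zpow_mul, zpow_natCast]
  simp_rw [hsum]
  have hdc : (d : ℂ) ≠ 0 := Nat.cast_ne_zero.mpr hd.ne'
  by_cases h : (d : ℤ) ∣ n
  · obtain ⟨k, rfl⟩ := h
    rw [if_pos ⟨k, rfl⟩]
    have h1 : ω d ^ ((d:ℤ) * k) = 1 := by rw [zpow_mul, omega_pow_d d hd, one_zpow]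
    simp [h1]
  · rw [if_neg h]
    have h2 : (2 : ℂ) * Real.pi * Complex.I ≠ 0 := by
      simp [Complex.I_ne_zero, Real.pi_ne_zero]
    have hne : ω d ^ n ≠ 1 := by
      intro hone
      rw [omega_zpow, Complex.exp_eq_one_iff] at hone
      obtain ⟨k, hk⟩ := hone
      apply h
      refine ⟨k, ?_⟩
      have h3 : ((n : ℂ) - (d : ℂ) * k) * (2 * Real.pi * Complex.I) = 0 := by
        field_simp at hk
        linear_combination (2 * Real.pi * Complex.I) * hk
      rcases mul_eq_zero.mp h3 with h4 | h4
      · exact_mod_cast sub_eq_zero.mp h4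
      · exact absurd h4 h2
    rw [geom_sum_eq hne]
    have h5 : (ω d ^ n) ^ d = 1 := by
      rw [← zpow_natCast, ← zpow_mul, mul_comm, zpow_mul, omega_pow_d d hd, one_zpow]
    simp [h5]

lemma term_eq (d : ℕ) (hd : 0 < d) (a b : ℤ) (p q : ℕ) (m t : ℕ) :
    cc d ((m : ℤ) + a) ((t : ℤ) + b) * (starRingEnd ℂ) (cc d m t) *
        ω d ^ (-((t : ℤ) * a + (p : ℤ) * m * b + a * (q : ℤ) * ((t : ℤ) + b)))
      = Complex.exp (-Real.pi * Complex.I *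
            ((a : ℂ) ^ 2 + (b : ℂ) ^ 2 + 2 * (q : ℂ) * (a : ℂ) * (b : ℂ) +
              (d % 2 : ℕ) * ((a : ℂ) + (b : ℂ))) / (d : ℂ)) *
        (ω d ^ ((-(a + (p : ℤ) * b)) * (m : ℤ)) *
          ω d ^ ((-(a + b + (q : ℤ) * a)) * (t : ℤ))) := by
  have hdc : (d : ℂ) ≠ 0 := Nat.cast_ne_zero.mpr hd.ne'
  rw [cc, cc, omega_zpow, omega_zpow, omega_zpow, map_mul, ← Complex.exp_conj,
    ← Complex.exp_conj]
  simp only [map_mul, map_div₀, map_neg, map_add, Complex.conj_I, Complex.conj_ofReal,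
    map_intCast, map_natCast]
  rw [← Complex.exp_add, ← Complex.exp_add, ← Complex.exp_add, ← Complex.exp_add,
    ← Complex.exp_add, ← Complex.exp_add]
  congr 1
  field_simp
  push_cast
  ring

/-- The general interference sum `Σ_{m,t} c_{m+a,t+b} c*_{m,t} ω^{-ta-pmb-aq(t+b)}`
equals `d² e^{-iπ(a²+b²+2qab+δ(a+b))/d}` when `d ∣ a+pb` and `d ∣ a+b+qa`,
and `0` otherwise. -/
theorem interference_sum_general (d : ℕ) (hd : 2 ≤ d) (a b : ℤ) (p q : ℕ) :
    ∑ m ∈ Finset.range d, ∑ t ∈ Finset.range d,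
        cc d ((m : ℤ) + a) ((t : ℤ) + b) * (starRingEnd ℂ) (cc d m t) *
          ω d ^ (-((t : ℤ) * a + (p : ℤ) * m * b + a * (q : ℤ) * ((t : ℤ) + b)))
      = if (d : ℤ) ∣ (a + (p : ℤ) * b) ∧ (d : ℤ) ∣ (a + b + (q : ℤ) * a) then
          (d : ℂ) ^ 2 * Complex.exp (-Real.pi * Complex.I *
            ((a : ℂ) ^ 2 + (b : ℂ) ^ 2 + 2 * (q : ℂ) * (a : ℂ) * (b : ℂ) +
              (d % 2 : ℕ) * ((a : ℂ) + (b : ℂ))) / (d : ℂ))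
        else 0 := by
  have hd0 : 0 < d := by omega
  set C : ℂ := Complex.exp (-Real.pi * Complex.I *
      ((a : ℂ) ^ 2 + (b : ℂ) ^ 2 + 2 * (q : ℂ) * (a : ℂ) * (b : ℂ) +
        (d % 2 : ℕ) * ((a : ℂ) + (b : ℂ))) / (d : ℂ)) with hC
  have h1 : ∑ m ∈ Finset.range d, ∑ t ∈ Finset.range d,
      cc d ((m : ℤ) + a) ((t : ℤ) + b) * (starRingEnd ℂ) (cc d m t) *
        ω d ^ (-((t : ℤ) * a + (p : ℤ) * m * b + a * (q : ℤ) * ((t : ℤ) + b)))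
      = C * ((∑ m ∈ Finset.range d, ω d ^ ((-(a + (p : ℤ) * b)) * (m : ℤ))) *
          (∑ t ∈ Finset.range d, ω d ^ ((-(a + b + (q : ℤ) * a)) * (t : ℤ)))) := by
    rw [Finset.sum_mul_sum, Finset.mul_sum]
    refine Finset.sum_congr rfl fun m _ => ?_
    rw [Finset.mul_sum]
    exact Finset.sum_congr rfl fun t _ => term_eq d hd0 a b p q m t
  rw [h1, geom_aux d hd0, geom_aux d hd0]
  simp only [dvd_neg]
  by_cases ha : (d : ℤ) ∣ (a + (p : ℤ) * b) <;>
    by_cases hb : (d : ℤ) ∣ (a + b + (q : ℤ) * a)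
  · rw [if_pos ha, if_pos hb, if_pos ⟨ha, hb⟩]; ring
  · rw [if_pos ha, if_neg hb, if_neg (show ¬((d : ℤ) ∣ (a + (p : ℤ) * b) ∧
        (d : ℤ) ∣ (a + b + (q : ℤ) * a)) from fun h => hb h.2), mul_zero, mul_zero]
  · rw [if_neg ha, if_pos hb, if_neg (show ¬((d : ℤ) ∣ (a + (p : ℤ) * b) ∧
        (d : ℤ) ∣ (a + b + (q : ℤ) * a)) from fun h => ha h.1), zero_mul, mul_zero]
  · rw [if_neg ha, if_neg hb, if_neg (show ¬((d : ℤ) ∣ (a + (p : ℤ) * b) ∧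
        (d : ℤ) ∣ (a + b + (q : ℤ) * a)) from fun h => ha h.1), zero_mul, mul_zero]

end
end

section
/- Let d ≥ 2 and let n ≥ 1. Define ρ = (1/d^n) Σ over pairs (a,b) in the solution set S of the system {a + pb ≡ 0, a + b + qa ≡ 0 (mod d)} of e^{-iπ(a²+b²+2qab+δ(a+b))/d} ⟨ψ|X_d^a Z_d^b|ψ⟩ (X_d^a Z_d^b)^{⊗p} ⊗ (X_d^{-a} Z_d^b)^{⊗q}, where p + q = n and δ = d mod 2. If gcd(d, p(q+1) − 1) = 1, then ρ = (1/d^n) I^{⊗n}, i.e., ρ is the maximally mixed state on (ℂ^d)^{⊗n}, independent of the unit vector ψ. -/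
open Matrix Complex BigOperators
open scoped Kronecker

noncomputable section

/-- The generalized Pauli shift operator `X_d : |k⟩ ↦ |k+1⟩` on `ℂ^d`. -/
def Xd (d : ℕ) : Matrix (ZMod d) (ZMod d) ℂ :=
  Matrix.of fun i j => if i = j + 1 then 1 else 0

/-- The generalized Pauli phase operator `Z_d : |k⟩ ↦ ω^k |k⟩` on `ℂ^d`. -/
def Zd (d : ℕ) : Matrix (ZMod d) (ZMod d) ℂ :=
  Matrix.diagonal fun k => ω d ^ (k.val)

/-- Integer power of a `d`-periodic matrix (`M^d = 1`), so `M^k := M^(k mod d)`. -/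
def zp (d : ℕ) [NeZero d] (M : Matrix (ZMod d) (ZMod d) ℂ) (k : ℤ) :
    Matrix (ZMod d) (ZMod d) ℂ :=
  M ^ (k % (d : ℤ)).toNat

/-- The `m`-fold tensor power of a matrix on `ℂ^d`, as a matrix on `(ℂ^d)^{⊗m}`. -/
def tpow {d : ℕ} (M : Matrix (ZMod d) (ZMod d) ℂ) (m : ℕ) :
    Matrix (Fin m → ZMod d) (Fin m → ZMod d) ℂ :=
  Matrix.of fun f g => ∏ i, M (f i) (g i)

lemma tpow_one (d m : ℕ) : tpow (1 : Matrix (ZMod d) (ZMod d) ℂ) m = 1 := by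
  ext f g
  by_cases h : f = g
  · subst h; simp [tpow, Matrix.one_apply]
  · obtain ⟨i, hi⟩ := Function.ne_iff.mp h
    simp only [tpow, Matrix.of_apply, Matrix.one_apply, h, if_false]
    exact Finset.prod_eq_zero (Finset.mem_univ i) (by simp [Matrix.one_apply, hi])


/-- If `gcd(d, p(q+1) − 1) = 1`, the reduced state of an aligned unauthorized
subset with `p` signal and `q = n − p` noise qudits is maximally mixed,
independently of the unit input state `ψ`. -/
theorem aligned_subset_maximally_mixed (d n p q : ℕ) [NeZero d]
    (hd : 2 ≤ d) (hn : 1 ≤ n) (hpq : p + q = n)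
    (ψ : ZMod d → ℂ) (hψ : ∑ i, (starRingEnd ℂ) (ψ i) * ψ i = 1)
    (hgcd : Int.gcd (d : ℤ) ((p : ℤ) * ((q : ℤ) + 1) - 1) = 1) :
    ((d : ℂ) ^ n)⁻¹ •
      ∑ ab ∈ Finset.univ.filter
          (fun ab : ZMod d × ZMod d =>
            ab.1 + (p : ZMod d) * ab.2 = 0 ∧ ab.1 + ab.2 + (q : ZMod d) * ab.1 = 0),
        (Complex.exp (-Real.pi * Complex.I *
            ((ab.1.val : ℂ) ^ 2 + (ab.2.val : ℂ) ^ 2 +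
              2 * (q : ℂ) * (ab.1.val : ℂ) * (ab.2.val : ℂ) +
              ((d % 2 : ℕ) : ℂ) * ((ab.1.val : ℂ) + (ab.2.val : ℂ))) / (d : ℂ)) *
          dotProduct (star ψ)
            ((zp d (Xd d) (ab.1.val : ℤ) * zp d (Zd d) (ab.2.val : ℤ)).mulVec ψ)) •
        (tpow (zp d (Xd d) (ab.1.val : ℤ) * zp d (Zd d) (ab.2.val : ℤ)) p ⊗ₖ
          tpow (zp d (Xd d) (-(ab.1.val : ℤ)) * zp d (Zd d) (ab.2.val : ℤ)) q)
      = ((d : ℂ) ^ n)⁻¹ •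
          (1 : Matrix ((Fin p → ZMod d) × (Fin q → ZMod d))
              ((Fin p → ZMod d) × (Fin q → ZMod d)) ℂ) := by
  -- The coefficient p(q+1) - 1 is a unit mod d
  have hu : IsUnit (((p : ℤ) * ((q : ℤ) + 1) - 1 : ℤ) : ZMod d) := by
    obtain ⟨x, y, hxy⟩ := Int.isCoprime_iff_gcd_eq_one.mpr hgcd
    refine IsUnit.of_mul_eq_one ((y : ZMod d)) ?_
    have := congrArg (fun z : ℤ => (z : ZMod d)) hxy
    push_cast at this ⊢
    simpa [ZMod.natCast_self, mul_comm] using this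
  -- the filter set is the singleton {(0,0)}
  have hS : (Finset.univ.filter
      (fun ab : ZMod d × ZMod d =>
        ab.1 + (p : ZMod d) * ab.2 = 0 ∧ ab.1 + ab.2 + (q : ZMod d) * ab.1 = 0))
      = {((0 : ZMod d), (0 : ZMod d))} := by
    ext ⟨a, b⟩
    simp only [Finset.mem_filter, Finset.mem_univ, true_and, Finset.mem_singleton,
      Prod.mk.injEq]
    constructor
    · rintro ⟨h1, h2⟩
      have hb : b = -((1 : ZMod d) + q) * a := by linear_combination h2
      have ha : (((p : ℤ) * ((q : ℤ) + 1) - 1 : ℤ) : ZMod d) * a = 0 := by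
        push_cast
        linear_combination -h1 + (p : ZMod d) * hb
      have ha0 : a = 0 := by
        have := (IsUnit.mul_right_eq_zero hu).mp ha
        exact this
      refine ⟨ha0, ?_⟩
      rw [hb, ha0, mul_zero]
    · rintro ⟨rfl, rfl⟩; simp
  rw [hS, Finset.sum_singleton]
  have hval : (0 : ZMod d).val = 0 := ZMod.val_zero
  have hzp : ∀ M : Matrix (ZMod d) (ZMod d) ℂ, zp d M (0 : ℤ) = 1 := by
    intro M; simp [zp]
  simp only [hval, Nat.cast_zero, neg_zero, hzp, mul_one, one_mul,
    Matrix.one_mulVec, tpow_one]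
  have hexp : Complex.exp (-Real.pi * Complex.I *
      ((0 : ℂ) ^ 2 + (0 : ℂ) ^ 2 + 2 * (q : ℂ) * (0 : ℂ) * (0 : ℂ) +
        ((d % 2 : ℕ) : ℂ) * ((0 : ℂ) + (0 : ℂ))) / (d : ℂ)) = 1 := by
    norm_num
  rw [hexp]
  have hdot : dotProduct (star ψ) ψ = 1 := by
    rw [← hψ]
    simp [dotProduct, Complex.star_def]
  rw [hdot, one_mul, Matrix.one_kronecker_one, one_smul]

end
end
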